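/- Let Ω ⊂ ℝ³ be a nonempty bounded connected open set, let y : Ω → ℝ³ be twice continuously differentiable with det ∇y(x) > 0 for all x ∈ Ω, and let z : Ω → ℝ³ be twice continuously differentiable. Then sym((∇y(x))ᵀ ∇z(x)) = 0 for all x ∈ Ω if and only if there exist a vector a ∈ ℝ³ and a constant skew-symmetric matrix A ∈ Skew(3) such that z(x) = a + A y(x) for all x ∈ Ω; equivalently, z(x) = a + ω × y(x) for some a, ω ∈ ℝ³. -/

import Mathlib

open Matrix

/-- Frobenius inner product `A : B = tr(Aᵀ B)`. -/
noncomputable def finner {d : ℕ} (A B : Matrix (Fin d) (Fin d) ℝ) : ℝ := (Aᵀ * B).trace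

/-- Squared Frobenius norm `|A|² = A : A`. -/
noncomputable def fnormSq {d : ℕ} (A : Matrix (Fin d) (Fin d) ℝ) : ℝ := finner A A

/-- Frobenius norm `|A|`. -/
noncomputable def fnorm {d : ℕ} (A : Matrix (Fin d) (Fin d) ℝ) : ℝ := Real.sqrt (fnormSq A)

/-- Symmetric part `sym(M) = (M + Mᵀ)/2`. -/
noncomputable def symPart {d : ℕ} (M : Matrix (Fin d) (Fin d) ℝ) : Matrix (Fin d) (Fin d) ℝ :=
  (1 / 2 : ℝ) • (M + Mᵀ)

/-- Jacobian matrix `(∇y)_{ij} = ∂y_i/∂x_j` of a map `y : ℝ³ → ℝ³`. -/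
noncomputable def jac (y : (Fin 3 → ℝ) → (Fin 3 → ℝ)) (x : Fin 3 → ℝ) :
    Matrix (Fin 3) (Fin 3) ℝ :=
  Matrix.of fun i j => fderiv ℝ y x (Pi.single j 1) i

/-! ### Auxiliary lemmas -/

section Aux

lemma jac_mulVec (f : (Fin 3 → ℝ) → (Fin 3 → ℝ)) (x h : Fin 3 → ℝ) :
    (jac f x).mulVec h = fderiv ℝ f x h := by
  funext i
  have hh : h = ∑ j, (h j) • (Pi.single j (1:ℝ) : Fin 3 → ℝ) := by
    funext m
    simp [Finset.sum_apply, Pi.single_apply]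
  conv_rhs => rw [hh]
  simp [Matrix.mulVec, dotProduct, jac, Finset.sum_apply, mul_comm]

lemma jac_entry_hasFDerivAt {f : (Fin 3 → ℝ) → (Fin 3 → ℝ)} {x : Fin 3 → ℝ}
    (hf : ContDiffAt ℝ 2 f x) (i k : Fin 3) :
    HasFDerivAt (fun t => jac f t i k)
      (((ContinuousLinearMap.proj i).comp
          (ContinuousLinearMap.apply ℝ (Fin 3 → ℝ) (Pi.single k 1))).comp
        (fderiv ℝ (fderiv ℝ f) x)) x := by
  have h1 : ContDiffAt ℝ 1 (fderiv ℝ f) x := hf.fderiv_right (by norm_num)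
  have h2 : HasFDerivAt (fderiv ℝ f) (fderiv ℝ (fderiv ℝ f) x) x :=
    (h1.differentiableAt (by norm_num)).hasFDerivAt
  exact (((ContinuousLinearMap.proj i).comp
      (ContinuousLinearMap.apply ℝ (Fin 3 → ℝ) (Pi.single k 1))).hasFDerivAt).comp x h2

lemma jac_entry_fderiv_apply {f : (Fin 3 → ℝ) → (Fin 3 → ℝ)} {x : Fin 3 → ℝ}
    (hf : ContDiffAt ℝ 2 f x) (i k : Fin 3) (h : Fin 3 → ℝ) :
    fderiv ℝ (fun t => jac f t i k) x h = fderiv ℝ (fderiv ℝ f) x h (Pi.single k 1) i := by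
  rw [(jac_entry_hasFDerivAt hf i k).fderiv]; rfl

lemma schwarz_sym {f : (Fin 3 → ℝ) → (Fin 3 → ℝ)} {x : Fin 3 → ℝ}
    (hf : ContDiffAt ℝ 2 f x) (u v : Fin 3 → ℝ) :
    fderiv ℝ (fderiv ℝ f) x u v = fderiv ℝ (fderiv ℝ f) x v u :=
  (hf.isSymmSndFDerivAt (by norm_num)).eq u v

lemma const_of_fderiv_zero {E : Type*} [NormedAddCommGroup E] [NormedSpace ℝ E]
    {Ω : Set (Fin 3 → ℝ)} (hopen : IsOpen Ω) (hconn : IsPreconnected Ω)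
    {f : (Fin 3 → ℝ) → E} (hdiff : ∀ x ∈ Ω, DifferentiableAt ℝ f x)
    (hd : ∀ x ∈ Ω, fderiv ℝ f x = 0) {x₀ : Fin 3 → ℝ} (hx₀ : x₀ ∈ Ω) :
    ∀ x ∈ Ω, f x = f x₀ := by
  have hloc : ∀ x ∈ Ω, ∀ᶠ t in nhds x, f t = f x := by
    intro x hx
    obtain ⟨ε, hε, hball⟩ := Metric.isOpen_iff.1 hopen x hx
    have hconv : Convex ℝ (Metric.ball x ε) := convex_ball x ε
    have hconst : ∀ t ∈ Metric.ball x ε, f t = f x := by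
      intro t ht
      refine hconv.is_const_of_fderivWithin_eq_zero
        (fun s hs => (hdiff s (hball hs)).differentiableWithinAt) ?_ ht (Metric.mem_ball_self hε)
      intro s hs
      rw [fderivWithin_of_isOpen Metric.isOpen_ball hs]
      exact hd s (hball hs)
    exact Filter.eventually_of_mem (Metric.ball_mem_nhds x hε) hconst
  set u : Set (Fin 3 → ℝ) := {x ∈ Ω | f x = f x₀} with hu
  set v : Set (Fin 3 → ℝ) := {x ∈ Ω | f x ≠ f x₀} with hv
  have huo : IsOpen u := by
    rw [isOpen_iff_mem_nhds]
    rintro x ⟨hxΩ, hxf⟩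
    filter_upwards [(hloc x hxΩ), hopen.mem_nhds hxΩ] with t htf htΩ
    exact ⟨htΩ, htf.trans hxf⟩
  have hvo : IsOpen v := by
    rw [isOpen_iff_mem_nhds]
    rintro x ⟨hxΩ, hxf⟩
    filter_upwards [(hloc x hxΩ), hopen.mem_nhds hxΩ] with t htf htΩ
    exact ⟨htΩ, htf ▸ hxf⟩
  by_contra hcon
  push_neg at hcon
  obtain ⟨x₁, hx₁, hne⟩ := hcon
  have h1 : Ω ⊆ u ∪ v := fun t ht => by
    by_cases hc : f t = f x₀
    · exact Or.inl ⟨ht, hc⟩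
    · exact Or.inr ⟨ht, hc⟩
  have h2 : (Ω ∩ u).Nonempty := ⟨x₀, hx₀, hx₀, rfl⟩
  have h3 : (Ω ∩ v).Nonempty := ⟨x₁, hx₁, hx₁, hne⟩
  obtain ⟨t, -, ⟨-, ht1⟩, ⟨-, ht2⟩⟩ := hconn u v huo hvo h1 h2 h3
  exact ht2 ht1

lemma triple_zero (e : Fin 3 → Fin 3 → Fin 3 → ℝ)
    (hsym : ∀ i m k, e i m k = e i k m)
    (hskew : ∀ i m k, e i m k = - e m i k) :
    ∀ i m k, e i m k = 0 := by
  intro i m k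
  linarith [hsym i m k, hskew i m k, hsym m i k, hskew m k i, hsym k m i, hskew k i m, hsym i k m,
    hskew i k m, hsym m k i, hskew m i k, hsym k i m, hskew k m i]

lemma D_zero (F : Matrix (Fin 3) (Fin 3) ℝ) (hF : IsUnit F.det)
    (D : Fin 3 → Matrix (Fin 3) (Fin 3) ℝ)
    (hskew : ∀ j i m, D j i m = - D j m i)
    (hsym : ∀ j k i, ∑ m, D j i m * F m k = ∑ m, D k i m * F m j) :
    ∀ j, D j = 0 := by
  set B := F⁻¹ with hB
  have hFB : F * B = 1 := Matrix.mul_nonsing_inv F hF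
  have hBF : B * F = 1 := Matrix.nonsing_inv_mul F hF
  set E : Fin 3 → Fin 3 → Fin 3 → ℝ := fun k i m => ∑ j, B j k * D j i m with hE
  have hexp : ∀ k i m, E k i m = ∑ j, ∑ j', B j k * B j' m * ((D j) * F) i j' := by
    intro k i m
    refine Finset.sum_congr rfl fun j _ => ?_
    have h1 : D j i m = ((D j) * F * B) i m := by
      rw [Matrix.mul_assoc, hFB, Matrix.mul_one]
    rw [h1, Matrix.mul_apply, Finset.mul_sum]
    exact Finset.sum_congr rfl fun j' _ => by ring
  have hsym' : ∀ j j' i, ((D j) * F) i j' = ((D j') * F) i j := by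
    intro j j' i
    rw [Matrix.mul_apply, Matrix.mul_apply]
    exact hsym j j' i
  have hEsym : ∀ i m k, E k i m = E m i k := by
    intro i m k
    rw [hexp, hexp, Finset.sum_comm]
    refine Finset.sum_congr rfl fun j' _ => Finset.sum_congr rfl fun j _ => ?_
    rw [hsym' j j' i]; ring
  have hEskew : ∀ i m k, E k i m = - E k m i := by
    intro i m k
    rw [hE]
    simp only [← Finset.sum_neg_distrib]
    exact Finset.sum_congr rfl fun j _ => by rw [hskew j i m]; ring
  have hE0 : ∀ k i m, E k i m = 0 :=
    fun k i m => triple_zero (fun i m k => E k i m) hEsym hEskew i m k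
  intro j
  ext i m
  have key : D j i m = ∑ k, F k j * E k i m := by
    calc D j i m = ∑ j', ((1 : Matrix (Fin 3) (Fin 3) ℝ) j' j) * D j' i m := by
          simp [Matrix.one_apply]
      _ = ∑ j', ((B * F) j' j) * D j' i m := by rw [hBF]
      _ = ∑ j', (∑ k, B j' k * F k j) * D j' i m := by
          simp [Matrix.mul_apply]
      _ = ∑ k, F k j * E k i m := by
          simp only [Finset.sum_mul, Finset.mul_sum, hE]
          rw [Finset.sum_comm]
          exact Finset.sum_congr rfl fun k _ => Finset.sum_congr rfl fun j' _ => by ring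
  rw [key]
  simp [hE0]

lemma det_entry_diff (M : (Fin 3 → ℝ) → Matrix (Fin 3) (Fin 3) ℝ) (x₀ : Fin 3 → ℝ)
    (hFd : ∀ i j, DifferentiableAt ℝ (fun x => M x i j) x₀) :
    DifferentiableAt ℝ (fun x => (M x).det) x₀ := by
  have h00 := hFd 0 0; have h01 := hFd 0 1; have h02 := hFd 0 2
  have h10 := hFd 1 0; have h11 := hFd 1 1; have h12 := hFd 1 2
  have h20 := hFd 2 0; have h21 := hFd 2 1; have h22 := hFd 2 2
  simp only [Matrix.det_fin_three]
  fun_prop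

set_option maxHeartbeats 1000000 in
lemma adjugate_entry_diff (M : (Fin 3 → ℝ) → Matrix (Fin 3) (Fin 3) ℝ) (x₀ : Fin 3 → ℝ)
    (hFd : ∀ i j, DifferentiableAt ℝ (fun x => M x i j) x₀) (k m : Fin 3) :
    DifferentiableAt ℝ (fun x => (M x).adjugate k m) x₀ := by
  have h00 := hFd 0 0; have h01 := hFd 0 1; have h02 := hFd 0 2
  have h10 := hFd 1 0; have h11 := hFd 1 1; have h12 := hFd 1 2
  have h20 := hFd 2 0; have h21 := hFd 2 1; have h22 := hFd 2 2
  fin_cases k <;> fin_cases m <;>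
    simp only [Matrix.adjugate_fin_three, Matrix.cons_val', Matrix.cons_val_zero,
      Matrix.cons_val_one, Matrix.head_cons, Matrix.empty_val', Matrix.cons_val_fin_one,
      Matrix.head_fin_const, Matrix.of_apply, Fin.mk_one, Fin.mk_zero, Matrix.cons_val_two,
      Matrix.tail_cons, Fin.reduceFinMk] <;>
    fun_prop

lemma inv_entry_eq (F : Matrix (Fin 3) (Fin 3) ℝ) (k m : Fin 3) :
    F⁻¹ k m = (F.det)⁻¹ * F.adjugate k m := by
  rw [Matrix.inv_def, Matrix.smul_apply, Ring.inverse_eq_inv', smul_eq_mul]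

/-- Differentiability of the entries of `W = (jac z) * (jac y)⁻¹`. -/
lemma W_entry_diff {y z : (Fin 3 → ℝ) → (Fin 3 → ℝ)} {x₀ : Fin 3 → ℝ}
    (hy2 : ContDiffAt ℝ 2 y x₀) (hz2 : ContDiffAt ℝ 2 z x₀)
    (hdet : (jac y x₀).det ≠ 0) (i m : Fin 3) :
    DifferentiableAt ℝ (fun x => (jac z x * (jac y x)⁻¹) i m) x₀ := by
  have hFd : ∀ i j, DifferentiableAt ℝ (fun x => jac y x i j) x₀ :=
    fun i j => (jac_entry_hasFDerivAt hy2 i j).differentiableAt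
  have hGd : ∀ i j, DifferentiableAt ℝ (fun x => jac z x i j) x₀ :=
    fun i j => (jac_entry_hasFDerivAt hz2 i j).differentiableAt
  have heq : (fun x => (jac z x * (jac y x)⁻¹) i m) =
      fun x => ∑ k, jac z x i k * (((jac y x).det)⁻¹ * (jac y x).adjugate k m) := by
    funext x
    rw [Matrix.mul_apply]
    exact Finset.sum_congr rfl fun k _ => by rw [inv_entry_eq]
  rw [heq]
  refine DifferentiableAt.fun_sum fun k _ => (hGd i k).mul ?_
  exact ((det_entry_diff (fun x => jac y x) x₀ hFd).inv hdet).mul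
    (adjugate_entry_diff (fun x => jac y x) x₀ hFd k m)

lemma clm_zero_of_single (L : (Fin 3 → ℝ) →L[ℝ] ℝ) (h : ∀ j, L (Pi.single j 1) = 0) :
    L = 0 := by
  ext1 h'
  have hh : h' = ∑ j, (h' j) • (Pi.single j (1:ℝ) : Fin 3 → ℝ) := by
    funext m
    simp [Finset.sum_apply, Pi.single_apply]
  rw [hh]
  simp [h]

lemma W_fderiv_zero {Ω : Set (Fin 3 → ℝ)} (hopen : IsOpen Ω)
    {y z : (Fin 3 → ℝ) → (Fin 3 → ℝ)}
    (hy : ContDiffOn ℝ 2 y Ω) (hz : ContDiffOn ℝ 2 z Ω)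
    (hdet : ∀ x ∈ Ω, (jac y x).det ≠ 0)
    (hGWF : ∀ x ∈ Ω, jac z x = (jac z x * (jac y x)⁻¹) * jac y x)
    (hWskew : ∀ x ∈ Ω, (jac z x * (jac y x)⁻¹)ᵀ = -(jac z x * (jac y x)⁻¹))
    {x₀ : Fin 3 → ℝ} (hx₀ : x₀ ∈ Ω) (i₀ m₀ : Fin 3) :
    fderiv ℝ (fun x => (jac z x * (jac y x)⁻¹) i₀ m₀) x₀ = 0 := by
  set W : (Fin 3 → ℝ) → Matrix (Fin 3) (Fin 3) ℝ := fun x => jac z x * (jac y x)⁻¹ with hWdef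
  have hΩn : Ω ∈ nhds x₀ := hopen.mem_nhds hx₀
  have hy2 : ContDiffAt ℝ 2 y x₀ := hy.contDiffAt hΩn
  have hz2 : ContDiffAt ℝ 2 z x₀ := hz.contDiffAt hΩn
  have hWd : ∀ i m, DifferentiableAt ℝ (fun x => W x i m) x₀ :=
    fun i m => W_entry_diff hy2 hz2 (hdet x₀ hx₀) i m
  have hFd : ∀ i j, DifferentiableAt ℝ (fun x => jac y x i j) x₀ :=
    fun i j => (jac_entry_hasFDerivAt hy2 i j).differentiableAt
  set D : Fin 3 → Matrix (Fin 3) (Fin 3) ℝ :=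
    fun j => Matrix.of fun i m => fderiv ℝ (fun x => W x i m) x₀ (Pi.single j 1) with hD
  -- skewness of D j
  have hskewD : ∀ j i m, D j i m = - D j m i := by
    intro j i m
    have hev : (fun x => W x i m) =ᶠ[nhds x₀] fun x => -(W x m i) := by
      filter_upwards [hΩn] with t ht
      have := congrFun (congrFun (hWskew t ht) m) i
      simpa [Matrix.transpose_apply] using this
    have : fderiv ℝ (fun x => W x i m) x₀ = fderiv ℝ (fun x => -(W x m i)) x₀ :=
      hev.fderiv_eq
    rw [hD]
    simp only [Matrix.of_apply]
    rw [this, fderiv_fun_neg]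
    rfl
  -- the relation between derivatives
  have EQ : ∀ j k i, fderiv ℝ (fderiv ℝ z) x₀ (Pi.single j 1) (Pi.single k 1) i =
      ∑ m, (W x₀ i m * (fderiv ℝ (fderiv ℝ y) x₀ (Pi.single j 1) (Pi.single k 1) m)
            + jac y x₀ m k * D j i m) := by
    intro j k i
    have hev2 : (fun x => jac z x i k) =ᶠ[nhds x₀] fun x => ∑ m, W x i m * jac y x m k := by
      filter_upwards [hΩn] with t ht
      conv_lhs => rw [hGWF t ht]
      rw [Matrix.mul_apply]
    have hsum : HasFDerivAt (fun x => ∑ m, W x i m * jac y x m k)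
        (∑ m, (W x₀ i m • fderiv ℝ (fun t => jac y t m k) x₀
              + jac y x₀ m k • fderiv ℝ (fun x => W x i m) x₀)) x₀ := by
      apply HasFDerivAt.fun_sum
      intro m _
      exact ((hWd i m).hasFDerivAt).mul ((hFd m k).hasFDerivAt)
    have h1 : fderiv ℝ (fun x => jac z x i k) x₀ = _ := hev2.fderiv_eq.trans hsum.fderiv
    have h2 := congrFun (congrArg DFunLike.coe h1) (Pi.single j 1)
    simp only [ContinuousLinearMap.coe_sum', Finset.sum_apply, ContinuousLinearMap.add_apply,
      ContinuousLinearMap.coe_smul', Pi.smul_apply, smul_eq_mul] at h2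
    rw [jac_entry_fderiv_apply hz2 i k] at h2
    rw [h2]
    refine Finset.sum_congr rfl fun m _ => ?_
    rw [jac_entry_fderiv_apply hy2 m k]
    rw [hD]
    rfl
  -- symmetry relation for D
  have hsymD : ∀ j k i, ∑ m, D j i m * jac y x₀ m k = ∑ m, D k i m * jac y x₀ m j := by
    intro j k i
    have e1 := EQ j k i
    have e2 := EQ k j i
    have hz3 : fderiv ℝ (fderiv ℝ z) x₀ (Pi.single j 1) (Pi.single k 1) i
        = fderiv ℝ (fderiv ℝ z) x₀ (Pi.single k 1) (Pi.single j 1) i := by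
      rw [schwarz_sym hz2]
    have hy3 : ∀ m, fderiv ℝ (fderiv ℝ y) x₀ (Pi.single j 1) (Pi.single k 1) m
        = fderiv ℝ (fderiv ℝ y) x₀ (Pi.single k 1) (Pi.single j 1) m := by
      intro m; rw [schwarz_sym hy2]
    have e3 : ∑ m, (W x₀ i m * (fderiv ℝ (fderiv ℝ y) x₀ (Pi.single j 1) (Pi.single k 1) m)
            + jac y x₀ m k * D j i m)
        = ∑ m, (W x₀ i m * (fderiv ℝ (fderiv ℝ y) x₀ (Pi.single j 1) (Pi.single k 1) m)
            + jac y x₀ m j * D k i m) := by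
      rw [← e1, hz3, e2]
      exact Finset.sum_congr rfl fun m _ => by rw [hy3 m]
    have e4 : ∑ m, jac y x₀ m k * D j i m = ∑ m, jac y x₀ m j * D k i m := by
      have := sub_eq_zero.mpr e3
      rw [← Finset.sum_sub_distrib] at this
      have h5 : ∑ m, (jac y x₀ m k * D j i m - jac y x₀ m j * D k i m) = 0 := by
        rw [← this]
        exact Finset.sum_congr rfl fun m _ => by ring
      rw [Finset.sum_sub_distrib] at h5
      exact sub_eq_zero.mp h5
    calc ∑ m, D j i m * jac y x₀ m k = ∑ m, jac y x₀ m k * D j i m :=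
          Finset.sum_congr rfl fun m _ => mul_comm _ _
      _ = ∑ m, jac y x₀ m j * D k i m := e4
      _ = ∑ m, D k i m * jac y x₀ m j := Finset.sum_congr rfl fun m _ => mul_comm _ _
  have hDzero : ∀ j, D j = 0 :=
    D_zero (jac y x₀) (isUnit_iff_ne_zero.mpr (hdet x₀ hx₀)) D hskewD hsymD
  apply clm_zero_of_single
  intro j
  have := congrFun (congrFun (hDzero j) i₀) m₀
  simpa [hD] using this

lemma skew_entries {A : Matrix (Fin 3) (Fin 3) ℝ} (hA : Aᵀ = -A) (i j : Fin 3) :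
    A j i = - A i j := congrFun (congrFun hA i) j

lemma skew_mulVec {A : Matrix (Fin 3) (Fin 3) ℝ} (hA : Aᵀ = -A) (v : Fin 3 → ℝ) :
    A.mulVec v = crossProduct ![A 2 1, A 0 2, A 1 0] v := by
  have h := skew_entries hA
  have h00 : A 0 0 = 0 := by linarith [h 0 0]
  have h11 : A 1 1 = 0 := by linarith [h 1 1]
  have h22 : A 2 2 = 0 := by linarith [h 2 2]
  funext i
  fin_cases i
  · simp [Matrix.mulVec, dotProduct, cross_apply, Fin.sum_univ_three]
    linear_combination v 0 * h00 + v 1 * (h 1 0)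
  · simp [Matrix.mulVec, dotProduct, cross_apply, Fin.sum_univ_three]
    linear_combination v 1 * h11 + v 2 * (h 2 1)
  · simp [Matrix.mulVec, dotProduct, cross_apply, Fin.sum_univ_three]
    linear_combination v 2 * h22 + v 0 * (h 0 2)

def crossMat (ω : Fin 3 → ℝ) : Matrix (Fin 3) (Fin 3) ℝ :=
  !![0, -ω 2, ω 1; ω 2, 0, -ω 0; -ω 1, ω 0, 0]

lemma crossMat_skew (ω : Fin 3 → ℝ) : (crossMat ω)ᵀ = -(crossMat ω) := by
  ext i j
  fin_cases i <;> fin_cases j <;> simp [crossMat]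

lemma crossMat_mulVec (ω : Fin 3 → ℝ) (v : Fin 3 → ℝ) :
    (crossMat ω).mulVec v = crossProduct ω v := by
  funext i
  fin_cases i <;>
    simp [crossMat, Matrix.mulVec, dotProduct, cross_apply, Fin.sum_univ_three] <;> ring

end Aux

theorem statement11 (Ω : Set (Fin 3 → ℝ)) (hne : Ω.Nonempty) (hopen : IsOpen Ω)
    (hconn : IsConnected Ω) (hbdd : Bornology.IsBounded Ω)
    (y z : (Fin 3 → ℝ) → (Fin 3 → ℝ))
    (hy : ContDiffOn ℝ 2 y Ω) (hz : ContDiffOn ℝ 2 z Ω)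
    (hdet : ∀ x ∈ Ω, 0 < (jac y x).det) :
    ((∀ x ∈ Ω, symPart ((jac y x)ᵀ * jac z x) = 0) ↔
      ∃ (a : Fin 3 → ℝ) (A : Matrix (Fin 3) (Fin 3) ℝ), Aᵀ = -A ∧
        ∀ x ∈ Ω, z x = a + A.mulVec (y x)) ∧
    ((∀ x ∈ Ω, symPart ((jac y x)ᵀ * jac z x) = 0) ↔
      ∃ a ω : Fin 3 → ℝ, ∀ x ∈ Ω, z x = a + crossProduct ω (y x)) := by
  obtain ⟨x₀, hx₀⟩ := hne
  have hprecon := hconn.isPreconnected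
  have hdet' : ∀ x ∈ Ω, (jac y x).det ≠ 0 := fun x hx => (hdet x hx).ne'
  have hunit : ∀ x ∈ Ω, IsUnit (jac y x).det :=
    fun x hx => isUnit_iff_ne_zero.mpr (hdet' x hx)
  set W : (Fin 3 → ℝ) → Matrix (Fin 3) (Fin 3) ℝ := fun x => jac z x * (jac y x)⁻¹ with hWdef
  have hGWF : ∀ x ∈ Ω, jac z x = W x * jac y x := fun x hx =>
    (Matrix.nonsing_inv_mul_cancel_right (jac y x) (jac z x) (hunit x hx)).symm
  -- forward direction
  have forward : (∀ x ∈ Ω, symPart ((jac y x)ᵀ * jac z x) = 0) →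
      ∃ (a : Fin 3 → ℝ) (A : Matrix (Fin 3) (Fin 3) ℝ), Aᵀ = -A ∧
        ∀ x ∈ Ω, z x = a + A.mulVec (y x) := by
    intro hsym
    have hMskew : ∀ x ∈ Ω, (jac z x)ᵀ * jac y x = -((jac y x)ᵀ * jac z x) := by
      intro x hx
      have h1 := hsym x hx
      unfold symPart at h1
      have h2 : (jac y x)ᵀ * jac z x + ((jac y x)ᵀ * jac z x)ᵀ = 0 := by
        have h3 := congrArg (fun M => (2:ℝ) • M) h1
        simpa [smul_smul] using h3
      have h4 := eq_neg_of_add_eq_zero_right h2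
      rw [Matrix.transpose_mul, Matrix.transpose_transpose] at h4
      exact h4
    have hWskew : ∀ x ∈ Ω, (W x)ᵀ = -(W x) := by
      intro x hx
      have hGt : (jac z x)ᵀ = -((jac y x)ᵀ * jac z x) * (jac y x)⁻¹ := by
        rw [← hMskew x hx]
        exact (Matrix.mul_nonsing_inv_cancel_right (jac y x) ((jac z x)ᵀ) (hunit x hx)).symm
      calc (W x)ᵀ = ((jac y x)⁻¹)ᵀ * (jac z x)ᵀ := Matrix.transpose_mul _ _
        _ = ((jac y x)⁻¹)ᵀ * (-((jac y x)ᵀ * jac z x) * (jac y x)⁻¹) := by rw [hGt]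
        _ = -((jac y x * (jac y x)⁻¹)ᵀ * (jac z x * (jac y x)⁻¹)) := by
            rw [Matrix.transpose_mul]
            simp only [Matrix.neg_mul, Matrix.mul_neg, Matrix.mul_assoc]
        _ = -(W x) := by
            rw [Matrix.mul_nonsing_inv _ (hunit x hx), Matrix.transpose_one, Matrix.one_mul]
    have hfz : ∀ x ∈ Ω, ∀ i m : Fin 3, fderiv ℝ (fun t => W t i m) x = 0 :=
      fun x hx i m => W_fderiv_zero hopen hy hz hdet' hGWF hWskew hx i m
    have hWdiffOn : ∀ x ∈ Ω, ∀ i m : Fin 3, DifferentiableAt ℝ (fun t => W t i m) x := by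
      intro x hx i m
      exact W_entry_diff (hy.contDiffAt (hopen.mem_nhds hx)) (hz.contDiffAt (hopen.mem_nhds hx))
        (hdet' x hx) i m
    have hWconst : ∀ x ∈ Ω, W x = W x₀ := by
      intro x hx
      ext i m
      exact const_of_fderiv_zero hopen hprecon (fun t ht => hWdiffOn t ht i m)
        (fun t ht => hfz t ht i m) hx₀ x hx
    set A := W x₀ with hA
    have hAskew : Aᵀ = -A := hWskew x₀ hx₀
    set T : (Fin 3 → ℝ) →L[ℝ] (Fin 3 → ℝ) :=
      LinearMap.toContinuousLinearMap (Matrix.mulVecLin A) with hT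
    have hTapp : ∀ v, T v = A.mulVec v := fun v => rfl
    set g : (Fin 3 → ℝ) → (Fin 3 → ℝ) := fun x => z x - A.mulVec (y x) with hg
    have hdiffy : ∀ x ∈ Ω, DifferentiableAt ℝ y x := fun x hx =>
      (hy.contDiffAt (hopen.mem_nhds hx)).differentiableAt (by norm_num)
    have hdiffz : ∀ x ∈ Ω, DifferentiableAt ℝ z x := fun x hx =>
      (hz.contDiffAt (hopen.mem_nhds hx)).differentiableAt (by norm_num)
    have hgdiff : ∀ x ∈ Ω, DifferentiableAt ℝ g x := by
      intro x hx
      exact (hdiffz x hx).sub ((T.differentiableAt).comp x (hdiffy x hx))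
    have hg0 : ∀ x ∈ Ω, fderiv ℝ g x = 0 := by
      intro x hx
      have hgh : HasFDerivAt g (fderiv ℝ z x - T.comp (fderiv ℝ y x)) x :=
        ((hdiffz x hx).hasFDerivAt).sub (T.hasFDerivAt.comp x (hdiffy x hx).hasFDerivAt)
      rw [hgh.fderiv]
      ext1 h
      simp only [ContinuousLinearMap.sub_apply, ContinuousLinearMap.comp_apply,
        ContinuousLinearMap.zero_apply]
      rw [hTapp, ← jac_mulVec z x h, ← jac_mulVec y x h, Matrix.mulVec_mulVec]
      rw [hGWF x hx, hWconst x hx]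
      simp
    have hgconst := const_of_fderiv_zero hopen hprecon hgdiff hg0 hx₀
    refine ⟨g x₀, A, hAskew, fun x hx => ?_⟩
    have := hgconst x hx
    rw [hg] at this
    simpa [sub_eq_iff_eq_add] using this
  -- backward direction
  have backward : (∃ (a : Fin 3 → ℝ) (A : Matrix (Fin 3) (Fin 3) ℝ), Aᵀ = -A ∧
      ∀ x ∈ Ω, z x = a + A.mulVec (y x)) →
      ∀ x ∈ Ω, symPart ((jac y x)ᵀ * jac z x) = 0 := by
    rintro ⟨a, A, hA, hzeq⟩ x hx
    have hdiffy : DifferentiableAt ℝ y x :=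
      (hy.contDiffAt (hopen.mem_nhds hx)).differentiableAt (by norm_num)
    set T : (Fin 3 → ℝ) →L[ℝ] (Fin 3 → ℝ) :=
      LinearMap.toContinuousLinearMap (Matrix.mulVecLin A) with hT
    have hTapp : ∀ v, T v = A.mulVec v := fun v => rfl
    have hev : z =ᶠ[nhds x] fun t => a + T (y t) := by
      filter_upwards [hopen.mem_nhds hx] with t ht
      rw [hzeq t ht, hTapp]
    have hder : HasFDerivAt (fun t => a + T (y t)) (T.comp (fderiv ℝ y x)) x :=
      (T.hasFDerivAt.comp x hdiffy.hasFDerivAt).const_add a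
    have hfzx : fderiv ℝ z x = T.comp (fderiv ℝ y x) := hev.fderiv_eq.trans hder.fderiv
    have hjac : jac z x = A * jac y x := by
      ext i k
      show fderiv ℝ z x (Pi.single k 1) i = _
      rw [hfzx]
      show T (fderiv ℝ y x (Pi.single k 1)) i = (A * jac y x) i k
      rw [hTapp, Matrix.mul_apply]
      simp [Matrix.mulVec, dotProduct, jac]
    rw [hjac]
    unfold symPart
    have hMt : ((jac y x)ᵀ * (A * jac y x))ᵀ = -((jac y x)ᵀ * (A * jac y x)) := by
      rw [Matrix.transpose_mul, Matrix.transpose_mul, Matrix.transpose_transpose, hA]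
      simp only [Matrix.neg_mul, Matrix.mul_neg, Matrix.mul_assoc]
    rw [hMt]
    simp
  refine ⟨⟨forward, backward⟩, ?_, ?_⟩
  · intro h
    obtain ⟨a, A, hA, he⟩ := forward h
    exact ⟨a, ![A 2 1, A 0 2, A 1 0], fun x hx => by rw [he x hx, skew_mulVec hA]⟩
  · rintro ⟨a, ω, he⟩
    exact backward ⟨a, crossMat ω, crossMat_skew ω,
      fun x hx => by rw [he x hx, ← crossMat_mulVec]⟩
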